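/- For every natural number w ≥ 1 and every τ ∈ (0,1), one has τ·(1−τ)/(4·(w+2)) ≤ ⌈wτ⌉·(w+1−⌈wτ⌉)/((w+1)²·(w+2)) ≤ 1/(w+2). -/
import Mathlib


theorem stmt2 (w : ℕ) (hw : 1 ≤ w) (τ : ℝ) (hτ0 : 0 < τ) (hτ1 : τ < 1) :
    τ * (1 - τ) / (4 * ((w : ℝ) + 2)) ≤
      (⌈(w : ℝ) * τ⌉ : ℝ) * ((w : ℝ) + 1 - (⌈(w : ℝ) * τ⌉ : ℝ)) /
        (((w : ℝ) + 1) ^ 2 * ((w : ℝ) + 2)) ∧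
    (⌈(w : ℝ) * τ⌉ : ℝ) * ((w : ℝ) + 1 - (⌈(w : ℝ) * τ⌉ : ℝ)) /
        (((w : ℝ) + 1) ^ 2 * ((w : ℝ) + 2)) ≤ 1 / ((w : ℝ) + 2) := by
  set c : ℝ := (⌈(w : ℝ) * τ⌉ : ℝ) with hc
  have hw1 : (1:ℝ) ≤ (w:ℝ) := by exact_mod_cast hw
  have hwt : 0 < (w:ℝ) * τ := by positivity
  have h1 : (w:ℝ) * τ ≤ c := Int.le_ceil _
  have h2 : c ≤ (w:ℝ) * τ + 1 := by
    have := Int.ceil_lt_add_one ((w:ℝ) * τ)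
    rw [hc]; linarith
  have h3 : c ≤ (w:ℝ) := by
    have h : ⌈(w : ℝ) * τ⌉ ≤ (w : ℤ) := by
      apply Int.ceil_le.2
      push_cast
      nlinarith
    rw [hc]
    exact_mod_cast h
  have h4 : (1:ℝ) ≤ c := by
    have h : (0:ℤ) < ⌈(w : ℝ) * τ⌉ := Int.ceil_pos.2 hwt
    have : (1:ℤ) ≤ ⌈(w : ℝ) * τ⌉ := h
    rw [hc]; exact_mod_cast this
  have hd1 : (0:ℝ) < ((w:ℝ) + 1) ^ 2 * ((w:ℝ) + 2) := by positivity
  have hd2 : (0:ℝ) < 4 * ((w:ℝ) + 2) := by positivity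
  constructor
  · rw [div_le_div_iff₀ hd2 hd1]
    have hP : (0:ℝ) ≤ τ * (1 - τ) * (3 * (w:ℝ)^2 - 2 * (w:ℝ) - 1) := by
      apply mul_nonneg (mul_nonneg hτ0.le (by linarith)); nlinarith
    have key : τ * (1 - τ) * ((w:ℝ) + 1) ^ 2 ≤ 4 * (c * ((w:ℝ) + 1 - c)) := by
      rcases le_total (2 * c) ((w:ℝ) + 1) with hcase | hcase
      · have hA : (w:ℝ) * τ * ((w:ℝ) + 1 - (w:ℝ) * τ) ≤ c * ((w:ℝ) + 1 - c) := by
          nlinarith [mul_nonneg (sub_nonneg.2 h1) (by linarith : (0:ℝ) ≤ (w:ℝ) + 1 - c - (w:ℝ) * τ)]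
        nlinarith
      · have hA : ((w:ℝ) * τ + 1) * ((w:ℝ) - (w:ℝ) * τ) ≤ c * ((w:ℝ) + 1 - c) := by
          nlinarith [mul_nonneg (sub_nonneg.2 h2) (by linarith : (0:ℝ) ≤ c + (w:ℝ) * τ - (w:ℝ))]
        nlinarith
    nlinarith [key, mul_le_mul_of_nonneg_right key (by linarith : (0:ℝ) ≤ (w:ℝ) + 2)]
  · rw [div_le_div_iff₀ hd1 (by positivity : (0:ℝ) < (w:ℝ) + 2)]
    nlinarith [sq_nonneg (2 * c - ((w:ℝ) + 1))]
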